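/- Let n be a positive integer and let c be a positive integer dividing n² + n + 1. Then the set {(ζ + ζ^n + ζ^{-n-1}, ζ⁻¹ + ζ^{-n} + ζ^{n+1}) : ζ ∈ ℂ, ζ^c = 1} ⊆ ℂ² has exactly (c + 2·gcd(c,3))/3 elements. -/

import Mathlib

open Polynomial Finset

namespace Stmt18

/-- The map in question. -/
noncomputable def F (n : ℕ) (ζ : ℂ) : ℂ × ℂ :=
  (ζ + ζ ^ n + (ζ ^ (n + 1))⁻¹, ζ⁻¹ + (ζ ^ n)⁻¹ + ζ ^ (n + 1))

variable {n c : ℕ}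

lemma pow_sum_one (hdvd : c ∣ n ^ 2 + n + 1) {ζ : ℂ} (hζ : ζ ^ c = 1) :
    ζ ^ (n ^ 2 + n + 1) = 1 := by
  obtain ⟨k, hk⟩ := hdvd
  rw [hk, pow_mul, hζ, one_pow]

lemma pow_n3 (hn : 0 < n) (hdvd : c ∣ n ^ 2 + n + 1) {ζ : ℂ} (hζ : ζ ^ c = 1) :
    ζ ^ (n ^ 3) = ζ := by
  obtain ⟨m, rfl⟩ : ∃ m, n = m + 1 := ⟨n - 1, by omega⟩
  have h1 := pow_sum_one hdvd hζ
  have he : (m + 1) ^ 3 = ((m + 1) ^ 2 + (m + 1) + 1) * m + 1 := by ring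
  rw [he, pow_succ, pow_mul, h1, one_pow, one_mul]

lemma prodForm (hdvd : c ∣ n ^ 2 + n + 1) {ζ : ℂ} (hζ : ζ ^ c = 1) :
    F n ζ = (ζ + ζ ^ n + ζ ^ (n ^ 2),
      ζ ^ (n ^ 2 + n) + ζ ^ (n ^ 2 + 1) + ζ ^ (n + 1)) := by
  have h1 := pow_sum_one hdvd hζ
  have e1 : (ζ ^ (n + 1))⁻¹ = ζ ^ (n ^ 2) := by
    refine inv_eq_of_mul_eq_one_right ?_
    rw [← pow_add, show n + 1 + n ^ 2 = n ^ 2 + n + 1 by ring]; exact h1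
  have e2 : ζ⁻¹ = ζ ^ (n ^ 2 + n) := by
    refine inv_eq_of_mul_eq_one_left ?_
    rw [← pow_succ]; exact h1
  have e3 : (ζ ^ n)⁻¹ = ζ ^ (n ^ 2 + 1) := by
    refine inv_eq_of_mul_eq_one_right ?_
    rw [← pow_add, show n + (n ^ 2 + 1) = n ^ 2 + n + 1 by ring]; exact h1
  rw [F, e1, e2, e3]

lemma cubic (hdvd : c ∣ n ^ 2 + n + 1) (x : ℂ) {y : ℂ} (hy : y ^ c = 1) :
    (x - y) * (x - y ^ n) * (x - y ^ (n ^ 2)) =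
      x ^ 3 - (y + y ^ n + y ^ (n ^ 2)) * x ^ 2
        + (y ^ (n ^ 2 + n) + y ^ (n ^ 2 + 1) + y ^ (n + 1)) * x - 1 := by
  have h1 := pow_sum_one hdvd hy
  have q1 : y ^ n * y ^ (n ^ 2) = y ^ (n ^ 2 + n) := by rw [← pow_add, Nat.add_comm]
  have q2 : y * y ^ (n ^ 2) = y ^ (n ^ 2 + 1) := by rw [← pow_succ']
  have q3 : y * y ^ n = y ^ (n + 1) := by rw [← pow_succ']
  have q4 : y * y ^ n * y ^ (n ^ 2) = 1 := by
    rw [q3, ← pow_add, show n + 1 + n ^ 2 = n ^ 2 + n + 1 by ring]; exact h1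
  calc (x - y) * (x - y ^ n) * (x - y ^ (n ^ 2))
      = x ^ 3 - (y + y ^ n + y ^ (n ^ 2)) * x ^ 2
        + (y ^ n * y ^ (n ^ 2) + y * y ^ (n ^ 2) + y * y ^ n) * x
        - y * y ^ n * y ^ (n ^ 2) := by ring
    _ = _ := by rw [q4, q1, q2, q3]

lemma fiber_sub (hdvd : c ∣ n ^ 2 + n + 1) {ζ η : ℂ}
    (hζ : ζ ^ c = 1) (hη : η ^ c = 1) (hF : F n η = F n ζ) :
    η = ζ ∨ η = ζ ^ n ∨ η = ζ ^ (n ^ 2) := by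
  rw [prodForm hdvd hζ, prodForm hdvd hη, Prod.mk.injEq] at hF
  obtain ⟨h1, h2⟩ := hF
  have hz : (η - ζ) * (η - ζ ^ n) * (η - ζ ^ (n ^ 2)) = 0 := by
    rw [cubic hdvd η hζ, ← h1, ← h2, ← cubic hdvd η hη]
    simp
  rcases mul_eq_zero.mp hz with h | h
  · rcases mul_eq_zero.mp h with h | h
    · exact Or.inl (sub_eq_zero.mp h)
    · exact Or.inr (Or.inl (sub_eq_zero.mp h))
  · exact Or.inr (Or.inr (sub_eq_zero.mp h))

lemma pow_n_root {ζ : ℂ} (hζ : ζ ^ c = 1) : (ζ ^ n) ^ c = 1 := by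
  rw [← pow_mul, mul_comm, pow_mul, hζ, one_pow]

lemma F_pow (hn : 0 < n) (hdvd : c ∣ n ^ 2 + n + 1) {ζ : ℂ} (hζ : ζ ^ c = 1) :
    F n (ζ ^ n) = F n ζ := by
  have h3 := pow_n3 hn hdvd hζ
  rw [prodForm hdvd hζ, prodForm hdvd (pow_n_root hζ), Prod.mk.injEq]
  constructor
  · rw [← pow_mul, ← pow_mul, show n * n = n ^ 2 by ring, show n * n ^ 2 = n ^ 3 by ring, h3]
    ring
  · rw [← pow_mul, ← pow_mul, ← pow_mul,
      show n * (n ^ 2 + n) = n ^ 3 + n ^ 2 by ring,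
      show n * (n ^ 2 + 1) = n ^ 3 + n by ring,
      show n * (n + 1) = n ^ 2 + n by ring,
      pow_add, pow_add, h3, ← pow_succ', ← pow_succ']
    ring

lemma F_pow2 (hn : 0 < n) (hdvd : c ∣ n ^ 2 + n + 1) {ζ : ℂ} (hζ : ζ ^ c = 1) :
    F n (ζ ^ (n ^ 2)) = F n ζ := by
  rw [show n ^ 2 = n * n by ring, pow_mul, F_pow hn hdvd (pow_n_root hζ), F_pow hn hdvd hζ]

lemma three_dvd (hn : 0 < n) (hdvd : c ∣ n ^ 2 + n + 1) (h3c : 3 ∣ c) : 3 ∣ n - 1 := by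
  have h3 : 3 ∣ n ^ 2 + n + 1 := h3c.trans hdvd
  obtain ⟨q, r, hr, rfl⟩ : ∃ q r, r < 3 ∧ n = 3 * q + r :=
    ⟨n / 3, n % 3, Nat.mod_lt _ (by norm_num), by omega⟩
  have he : (3 * q + r) ^ 2 + (3 * q + r) + 1
      = 3 * (3 * q ^ 2 + 2 * q * r + q) + (r ^ 2 + r + 1) := by ring
  rw [he] at h3
  have h4 : 3 ∣ r ^ 2 + r + 1 := (Nat.dvd_add_right ⟨_, rfl⟩).mp h3
  interval_cases r <;> simp_all <;> omega

lemma gcd_eq (hn : 0 < n) (hdvd : c ∣ n ^ 2 + n + 1) : Nat.gcd c (n - 1) = Nat.gcd c 3 := by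
  obtain ⟨m, rfl⟩ : ∃ m, n = m + 1 := ⟨n - 1, by omega⟩
  apply Nat.dvd_antisymm
  · refine Nat.dvd_gcd (Nat.gcd_dvd_left _ _) ?_
    have hd1 : Nat.gcd c (m + 1 - 1) ∣ (m + 1) ^ 2 + (m + 1) + 1 :=
      (Nat.gcd_dvd_left _ _).trans hdvd
    have he : m * (m + 3) + 3 = (m + 1) ^ 2 + (m + 1) + 1 := by ring
    rw [← he] at hd1
    have hd2 : Nat.gcd c (m + 1 - 1) ∣ m * (m + 3) :=
      Dvd.dvd.mul_right (by simpa using Nat.gcd_dvd_right c (m + 1 - 1)) _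
    exact (Nat.dvd_add_right hd2).mp hd1
  · refine Nat.dvd_gcd (Nat.gcd_dvd_left _ _) ?_
    have h3 : Nat.gcd c 3 ∣ 3 := Nat.gcd_dvd_right _ _
    rcases (Nat.prime_three).eq_one_or_self_of_dvd _ h3 with h | h
    · rw [h]; exact one_dvd _
    · rw [h]
      exact three_dvd hn hdvd (h ▸ Nat.gcd_dvd_left c 3)

lemma fix_eq (hn : 0 < n) (hc : 0 < c) (hdvd : c ∣ n ^ 2 + n + 1) :
    (nthRootsFinset c (1 : ℂ)).filter (fun ζ => ζ ^ n = ζ) = nthRootsFinset (Nat.gcd c 3) (1 : ℂ) := by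
  have hg : 0 < Nat.gcd c 3 := Nat.gcd_pos_of_pos_left _ hc
  ext ζ
  rw [mem_filter, mem_nthRootsFinset hc (1 : ℂ), mem_nthRootsFinset hg (1 : ℂ)]
  constructor
  · rintro ⟨hζc, hfix⟩
    have hζ0 : ζ ≠ 0 := by
      rintro rfl
      rw [zero_pow hc.ne'] at hζc
      exact zero_ne_one hζc
    have hn1 : ζ ^ (n - 1) = 1 := by
      have : ζ ^ (n - 1) * ζ = 1 * ζ := by
        rw [one_mul, ← pow_succ, show n - 1 + 1 = n by omega, hfix]
      exact mul_right_cancel₀ hζ0 this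
    have hgcd : ζ ^ Nat.gcd c (n - 1) = 1 :=
      orderOf_dvd_iff_pow_eq_one.mp
        (Nat.dvd_gcd (orderOf_dvd_of_pow_eq_one hζc) (orderOf_dvd_of_pow_eq_one hn1))
    rwa [gcd_eq hn hdvd] at hgcd
  · intro hg1
    have hc1 : ζ ^ c = 1 := by
      obtain ⟨k, hk⟩ := Nat.gcd_dvd_left c 3
      rw [hk, pow_mul, hg1, one_pow]
    refine ⟨hc1, ?_⟩
    have hdn : Nat.gcd c 3 ∣ n - 1 := by
      rw [← gcd_eq hn hdvd]; exact Nat.gcd_dvd_right _ _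
    have hn1 : ζ ^ (n - 1) = 1 := by
      obtain ⟨k, hk⟩ := hdn
      rw [hk, pow_mul, hg1, one_pow]
    calc ζ ^ n = ζ ^ (n - 1 + 1) := by rw [show n - 1 + 1 = n by omega]
      _ = ζ ^ (n - 1) * ζ := pow_succ ζ (n - 1)
      _ = ζ := by rw [hn1, one_mul]

lemma fiber_eq (hn : 0 < n) (hc : 0 < c) (hdvd : c ∣ n ^ 2 + n + 1) {ζ : ℂ}
    (hζ : ζ ^ c = 1) :
    (nthRootsFinset c (1 : ℂ)).filter (fun η => F n η = F n ζ)
      = {ζ, ζ ^ n, ζ ^ (n ^ 2)} := by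
  ext η
  rw [mem_filter, mem_nthRootsFinset hc (1 : ℂ), mem_insert, mem_insert, mem_singleton]
  constructor
  · rintro ⟨hηc, hFη⟩
    exact fiber_sub hdvd hζ hηc hFη
  · rintro (rfl | rfl | rfl)
    · exact ⟨hζ, rfl⟩
    · exact ⟨pow_n_root hζ, F_pow hn hdvd hζ⟩
    · refine ⟨?_, F_pow2 hn hdvd hζ⟩
      rw [show n ^ 2 = n * n by ring, pow_mul]
      exact pow_n_root (pow_n_root hζ)

end Stmt18

open Stmt18 Polynomial Finset in
/-- for a positive integer `n` and a positive divisor `c` of `n² + n + 1`,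
the set `{(ζ + ζ^n + ζ^{-n-1}, ζ⁻¹ + ζ^{-n} + ζ^{n+1}) : ζ^c = 1} ⊆ ℂ²` has exactly
`(c + 2·gcd(c,3))/3` elements. -/
theorem stmt_18 (n c : ℕ) (hn : 0 < n) (hc : 0 < c) (hdvd : c ∣ n ^ 2 + n + 1) :
    (({xy : ℂ × ℂ | ∃ ζ : ℂ, ζ ^ c = 1 ∧
        xy = (ζ + ζ ^ n + (ζ ^ (n + 1))⁻¹, ζ⁻¹ + (ζ ^ n)⁻¹ + ζ ^ (n + 1))}).ncard : ℚ)
      = ((c : ℚ) + 2 * Nat.gcd c 3) / 3 := by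
  classical
  set T : Finset ℂ := nthRootsFinset c (1 : ℂ) with hTdef
  set I : Finset (ℂ × ℂ) := T.image (F n) with hIdef
  set Fx : Finset ℂ := T.filter (fun ζ => ζ ^ n = ζ) with hFxdef
  set J : Finset (ℂ × ℂ) := Fx.image (F n) with hJdef
  have hT : ∀ ζ : ℂ, ζ ∈ T ↔ ζ ^ c = 1 := fun ζ => mem_nthRootsFinset hc (1 : ℂ)
  -- the set is the coercion of I
  have hset : {xy : ℂ × ℂ | ∃ ζ : ℂ, ζ ^ c = 1 ∧
      xy = (ζ + ζ ^ n + (ζ ^ (n + 1))⁻¹, ζ⁻¹ + (ζ ^ n)⁻¹ + ζ ^ (n + 1))} = ↑I := by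
    ext xy
    simp only [Set.mem_setOf_eq, hIdef, coe_image, Set.mem_image, mem_coe, hT]
    constructor
    · rintro ⟨ζ, h1, h2⟩; exact ⟨ζ, h1, h2.symm⟩
    · rintro ⟨ζ, h1, h2⟩; exact ⟨ζ, h1, h2.symm⟩
  rw [hset, Set.ncard_coe_finset]
  -- card facts
  have hprim : IsPrimitiveRoot (Complex.exp (2 * Real.pi * Complex.I / c)) c :=
    Complex.isPrimitiveRoot_exp c hc.ne'
  have hTcard : T.card = c := hprim.card_nthRootsFinset
  have hFxcard : Fx.card = Nat.gcd c 3 := by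
    rw [hFxdef, fix_eq hn hc hdvd]
    exact (Complex.isPrimitiveRoot_exp _ (Nat.gcd_pos_of_pos_left 3 hc).ne').card_nthRootsFinset
  have hJI : J ⊆ I := image_subset_image (filter_subset _ _)
  have hJcard : J.card = Nat.gcd c 3 := by
    rw [hJdef, ← hFxcard]
    apply card_image_of_injOn
    intro ζ hζ η hη hF
    rw [mem_coe, hFxdef, mem_filter, hT] at hζ hη
    have hfix := hζ.2
    have hd2 : ζ ^ (n ^ 2) = ζ := by
      rw [show n ^ 2 = n * n by ring, pow_mul, hfix, hfix]
    rcases fiber_sub hdvd hζ.1 hη.1 hF.symm with h | h | h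
    · exact h.symm
    · rw [hfix] at h; exact h.symm
    · rw [hd2] at h; exact h.symm
  -- membership in J iff fixed representative
  have hJmem : ∀ ζ : ℂ, ζ ^ c = 1 → ζ ^ n ≠ ζ → F n ζ ∉ J := by
    intro ζ hζ hnf hmem
    rw [hJdef, mem_image] at hmem
    obtain ⟨η, hη, hFη⟩ := hmem
    rw [hFxdef, mem_filter, hT] at hη
    have hfix := hη.2
    have hd2 : η ^ (n ^ 2) = η := by
      rw [show n ^ 2 = n * n by ring, pow_mul, hfix, hfix]
    rcases fiber_sub hdvd hη.1 hζ hFη.symm with h | h | h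
    · rw [h] at hnf; exact hnf hfix
    · rw [hfix] at h; rw [h] at hnf; exact hnf hfix
    · rw [hd2] at h; rw [h] at hnf; exact hnf hfix
  -- fiber cardinalities
  have hfib1 : ∀ y ∈ J, (T.filter (fun ζ => F n ζ = y)).card = 1 := by
    intro y hy
    rw [hJdef, mem_image] at hy
    obtain ⟨ζ, hζ, rfl⟩ := hy
    rw [hFxdef, mem_filter, hT] at hζ
    obtain ⟨hζc, hfix⟩ := hζ
    have hd2 : ζ ^ (n ^ 2) = ζ := by
      rw [show n ^ 2 = n * n by ring, pow_mul, hfix, hfix]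
    rw [hTdef, fiber_eq hn hc hdvd hζc, hfix, hd2]
    simp
  have hfib3 : ∀ y ∈ I \ J, (T.filter (fun ζ => F n ζ = y)).card = 3 := by
    intro y hy
    rw [mem_sdiff, hIdef, mem_image] at hy
    obtain ⟨⟨ζ, hζT, rfl⟩, hyJ⟩ := hy
    rw [hT] at hζT
    have hnf : ζ ^ n ≠ ζ := by
      intro hfix
      exact hyJ (mem_image_of_mem _ (by rw [hFxdef, mem_filter, hT]; exact ⟨hζT, hfix⟩))
    have h3 := pow_n3 hn hdvd hζT
    have had : ζ ≠ ζ ^ (n ^ 2) := by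
      intro h
      apply hnf
      have := congrArg (· ^ n) h
      simp only [← pow_mul] at this
      rw [show n ^ 2 * n = n ^ 3 by ring, h3] at this
      exact this
    have hbd : ζ ^ n ≠ ζ ^ (n ^ 2) := by
      intro h
      apply hnf
      have := congrArg (· ^ n) h
      simp only [← pow_mul] at this
      rw [show n ^ 2 * n = n ^ 3 by ring, h3, show n * n = n ^ 2 by ring] at this
      exact h.trans this
    rw [hTdef, fiber_eq hn hc hdvd hζT]
    rw [card_insert_of_notMem (by simp [hnf.symm, had]), card_insert_of_notMem (by simp [hbd]),
      card_singleton]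
  -- Burnside count
  have hsum : T.card = ∑ y ∈ I, (T.filter (fun ζ => F n ζ = y)).card :=
    card_eq_sum_card_fiberwise (fun ζ hζ => mem_image_of_mem _ hζ)
  have hIsplit : J ∪ I \ J = I := union_sdiff_of_subset hJI
  rw [← hIsplit, sum_union disjoint_sdiff] at hsum
  rw [Finset.sum_congr rfl hfib1, Finset.sum_congr rfl hfib3, Finset.sum_const,
    Finset.sum_const, smul_eq_mul, mul_one, smul_eq_mul] at hsum
  have hsd : (I \ J).card = I.card - J.card := card_sdiff_of_subset hJI
  have hle : J.card ≤ I.card := card_le_card hJI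
  have hkey : 3 * I.card = c + 2 * Nat.gcd c 3 := by
    rw [hTcard, hJcard] at hsum
    omega
  -- conclude over ℚ
  have : ((3 : ℚ)) * I.card = (c : ℚ) + 2 * Nat.gcd c 3 := by exact_mod_cast hkey
  field_simp
  linarith
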